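/- arXiv:1709.01354 — 3 statements merged into one kernel-verified Lean document; each statement's English description precedes it below -/
import Mathlib

section
/- If G is a finite bipartite graph (no odd cycles and no loops; multiple edges allowed), then the nim-value of the graph take-away game on G equals its parity function: ν(G) = φ(G). -/
noncomputable section
open scoped Classical

/-- A finite multigraph with vertices and edge labels drawn from `ℕ`;
loops and multiple edges are allowed.  `ends e` is the unordered pair of
endpoints of the edge labelled `e`. -/
structure MGraph where
  verts : Finset ℕ
  edges : Finset ℕ
  ends : ℕ → Sym2 ℕ

namespace MGraph

/-- Well-formedness: every edge joins vertices of the graph. -/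
def WF (G : MGraph) : Prop := ∀ e ∈ G.edges, ∀ v ∈ G.ends e, v ∈ G.verts

/-- Delete the edge labelled `e`. -/
def delEdge (G : MGraph) (e : ℕ) : MGraph := ⟨G.verts, G.edges.erase e, G.ends⟩

/-- Delete the vertex `v` together with all incident edges. -/
def delVert (G : MGraph) (v : ℕ) : MGraph :=
  ⟨G.verts.erase v, G.edges.filter (fun e => ¬ v ∈ G.ends e), G.ends⟩

def size (G : MGraph) : ℕ := G.verts.card + G.edges.card

/-- Minimal excludant of a finite set of naturals. -/
def mex (s : Finset ℕ) : ℕ := sInf {n : ℕ | n ∉ s}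

/-- Grundy-value computation with fuel; every move strictly decreases `size`,
so fuel `size G` computes the true Sprague–Grundy value of `G`. -/
def nimAux : ℕ → MGraph → ℕ
  | 0, _ => 0
  | fuel + 1, G =>
      mex ((G.verts.image fun v => nimAux fuel (G.delVert v)) ∪
           (G.edges.image fun e => nimAux fuel (G.delEdge e)))

/-- The nim-value (Sprague–Grundy value) of the vertex-and-edge deletion game on
`G` : `ν(∅) = 0` and `ν(G) = mex {ν(H) : H is obtained from G by a single move}`,
where a move deletes one edge, or one vertex with all incident edges. -/
def nim (G : MGraph) : ℕ := nimAux G.size G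

/-- The parity function `φ(G) = (|V| mod 2) + 2 (|E| mod 2)`. -/
def phi (G : MGraph) : ℕ := G.verts.card % 2 + 2 * (G.edges.card % 2)

/-- `u` and `v` are joined by an edge. -/
def Adj (G : MGraph) (u v : ℕ) : Prop := ∃ e ∈ G.edges, G.ends e = s(u, v)

def Reach (G : MGraph) (u v : ℕ) : Prop := Relation.ReflTransGen G.Adj u v

def Connected (G : MGraph) : Prop :=
  G.verts.Nonempty ∧ ∀ u ∈ G.verts, ∀ v ∈ G.verts, G.Reach u v

/-- A (finite) tree: a connected well-formed graph with `|E| + 1 = |V|`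
(this forces the absence of loops, multiple edges and cycles). -/
def IsTree (G : MGraph) : Prop := G.WF ∧ G.Connected ∧ G.edges.card + 1 = G.verts.card

/-- `G` is a cycle graph of length `n ≥ 2`. -/
def IsCycle (G : MGraph) (n : ℕ) : Prop :=
  2 ≤ n ∧ ∃ f g : ℕ → ℕ,
    Set.InjOn f (Set.Iio n) ∧ Set.InjOn g (Set.Iio n) ∧
    G.verts = (Finset.range n).image f ∧
    G.edges = (Finset.range n).image g ∧
    ∀ i < n, G.ends (g i) = s(f i, f ((i + 1) % n))

/-- `G` is a cycle of odd length (hence of length at least 3). -/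
def IsOddCycle (G : MGraph) : Prop := ∃ n, Odd n ∧ G.IsCycle n

/-- Induced subgraph on a set of vertices. -/
def induce (G : MGraph) (S : Finset ℕ) : MGraph :=
  ⟨S, G.edges.filter (fun e => ∀ v ∈ G.ends e, v ∈ S), G.ends⟩

/-- The connected component of `v` in `G`. -/
def component (G : MGraph) (v : ℕ) : MGraph :=
  G.induce (G.verts.filter fun u => G.Reach v u)

/-- Two `MGraph`s are the same graph (same vertices, edges and incidence). -/
def SameGraph (G H : MGraph) : Prop :=
  G.verts = H.verts ∧ G.edges = H.edges ∧ ∀ e ∈ G.edges, G.ends e = H.ends e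

/-- An isomorphism of multigraphs. -/
structure Iso (G H : MGraph) where
  vmap : ℕ → ℕ
  emap : ℕ → ℕ
  vmap_bij : Set.BijOn vmap (G.verts : Set ℕ) (H.verts : Set ℕ)
  emap_bij : Set.BijOn emap (G.edges : Set ℕ) (H.edges : Set ℕ)
  ends_eq : ∀ e ∈ G.edges, H.ends (emap e) = (G.ends e).map vmap

/-- The data witnessing a cancellation at the vertex `s` : `G` is the disjoint
union of a graph `G'` containing `s` and two isomorphic graphs, with vertex
sets `B` and `C`, together with two edges `e₁`, `e₂` joining `s` to
corresponding vertices `v₁ ∈ B`, `v₂ ∈ C`. -/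
def Cancellation (G : MGraph) (s : ℕ) (B C : Finset ℕ) : Prop :=
  ∃ e₁ e₂ v₁ v₂ : ℕ,
    s ∈ G.verts ∧ s ∉ B ∧ s ∉ C ∧ Disjoint B C ∧
    B ⊆ G.verts ∧ C ⊆ G.verts ∧ v₁ ∈ B ∧ v₂ ∈ C ∧
    e₁ ∈ G.edges ∧ e₂ ∈ G.edges ∧ e₁ ≠ e₂ ∧
    G.ends e₁ = s(s, v₁) ∧ G.ends e₂ = s(s, v₂) ∧
    (∀ e ∈ G.edges, e = e₁ ∨ e = e₂ ∨ (∀ v ∈ G.ends e, v ∈ B) ∨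
      (∀ v ∈ G.ends e, v ∈ C) ∨ (∀ v ∈ G.ends e, v ∈ G.verts \ (B ∪ C))) ∧
    ∃ φ : Iso (G.induce B) (G.induce C), φ.vmap v₁ = v₂

def HasCancellationAt (G : MGraph) (s : ℕ) : Prop := ∃ B C, G.Cancellation s B C

/-- A graph is reduced if no cancellation is possible. -/
def Reduced (G : MGraph) : Prop := ∀ s, ¬ G.HasCancellationAt s

/-- Performing one cancellation. -/
def CancelStep (G G' : MGraph) : Prop :=
  ∃ s B C, G.Cancellation s B C ∧ G' = G.induce (G.verts \ (B ∪ C))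

/-- `G` reduces to `H` by a (possibly empty) sequence of cancellations. -/
def ReducesTo (G H : MGraph) : Prop := Relation.ReflTransGen CancelStep G H

/-- `G` consists of the odd cycle `C` attached to the tree `T` at the single
vertex `A`. -/
def CycleWithTreeAt (G C T : MGraph) (A : ℕ) : Prop :=
  C.IsOddCycle ∧ T.IsTree ∧
  C.verts ∩ T.verts = {A} ∧
  Disjoint C.edges T.edges ∧
  G.verts = C.verts ∪ T.verts ∧
  G.edges = C.edges ∪ T.edges ∧
  (∀ e ∈ C.edges, G.ends e = C.ends e) ∧
  (∀ e ∈ T.edges, G.ends e = T.ends e)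

/-- For a graph `G` containing the odd cycle `C` attached to the rest of the
graph at the vertex `A` : the vertex `v` (outside the cycle) is telescoping if,
after deleting `v`, the connected component of `A` reduces by repeatedly
performing cancellations to exactly the cycle `C`. -/
def Telescoping (G C : MGraph) (A v : ℕ) : Prop :=
  v ∈ G.verts ∧ v ∉ C.verts ∧
  ∃ H, ReducesTo ((G.delVert v).component A) H ∧ H.SameGraph C

/-- The degree of the vertex `v`; a loop contributes `2`. -/
def degree (G : MGraph) (v : ℕ) : ℕ :=
  ∑ e ∈ G.edges,
    (if G.ends e = s(v, v) then 2 else if v ∈ G.ends e then 1 else 0)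

def NoLoops (G : MGraph) : Prop := ∀ e ∈ G.edges, ¬ (G.ends e).IsDiag

def IsSubgraph (H G : MGraph) : Prop :=
  H.verts ⊆ G.verts ∧ H.edges ⊆ G.edges ∧ ∀ e ∈ H.edges, H.ends e = G.ends e

/-- `G` contains the odd cycle `C` and no other cycles (of length ≥ 2). -/
def UniqueOddCycle (G C : MGraph) : Prop :=
  C.IsSubgraph G ∧ C.IsOddCycle ∧
  ∀ (C' : MGraph) (n : ℕ), C'.IsSubgraph G → C'.IsCycle n → C'.SameGraph C

/-- `G` is bipartite (two-colourable); in particular it has no loops. -/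
def Bipartite (G : MGraph) : Prop :=
  ∃ c : ℕ → Bool, ∀ e ∈ G.edges, ∀ u v : ℕ, G.ends e = s(u, v) → c u ≠ c v

/-- `G` is a path of length `z` (i.e. with `z` edges) from `P` to `Q`. -/
def IsPath (G : MGraph) (P Q z : ℕ) : Prop :=
  ∃ f g : ℕ → ℕ,
    Set.InjOn f (Set.Iio (z + 1)) ∧ Set.InjOn g (Set.Iio z) ∧
    f 0 = P ∧ f z = Q ∧
    G.verts = (Finset.range (z + 1)).image f ∧
    G.edges = (Finset.range z).image g ∧
    ∀ i < z, G.ends (g i) = s(f i, f (i + 1))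

/-- There is a walk of length `n` from `u` to `v` in `G`. -/
def WalkLen (G : MGraph) (u v n : ℕ) : Prop :=
  ∃ f : ℕ → ℕ, f 0 = u ∧ f n = v ∧ ∀ i < n, G.Adj (f i) (f (i + 1))

/-- Graph distance between two vertices. -/
def edist (G : MGraph) (u v : ℕ) : ℕ := sInf {n | G.WalkLen u v n}

end MGraph

namespace MGraph

variable {G : MGraph}

/-- Number of edges incident to `v`. -/
def dcount (G : MGraph) (v : ℕ) : ℕ := (G.edges.filter (fun e => v ∈ G.ends e)).card

lemma mex_eq' {s : Finset ℕ} {k : ℕ} (h1 : k ∉ s) (h2 : ∀ j < k, j ∈ s) : mex s = k := by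
  have hk : k ∈ {n : ℕ | n ∉ s} := h1
  refine le_antisymm (Nat.sInf_le hk) ?_
  by_contra h
  push_neg at h
  have hm := Nat.sInf_mem (⟨k, hk⟩ : {n : ℕ | n ∉ s}.Nonempty)
  exact hm (h2 _ h)

lemma mex_empty : mex (∅ : Finset ℕ) = 0 :=
  mex_eq' (by simp) (by omega)

lemma ends_eq_pair {c : ℕ → Bool}
    (hc : ∀ e ∈ G.edges, ∀ u v : ℕ, G.ends e = s(u, v) → c u ≠ c v)
    {e : ℕ} (he : e ∈ G.edges) :
    ∃ a b, G.ends e = s(a, b) ∧ c a ≠ c b := by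
  obtain ⟨a, b, hab⟩ : ∃ a b, G.ends e = s(a, b) := by
    generalize G.ends e = z
    induction z using Sym2.ind with
    | _ x y => exact ⟨x, y, rfl⟩
  exact ⟨a, b, hab, hc e he a b hab⟩

lemma dcount_sum : G.dcount v + (G.delVert v).edges.card = G.edges.card := by
  classical
  simpa [dcount, delVert] using
    Finset.card_filter_add_card_filter_not (s := G.edges)
      (p := fun e => v ∈ G.ends e)

lemma card_verts_delVert {v : ℕ} (hv : v ∈ G.verts) :
    (G.delVert v).verts.card = G.verts.card - 1 := Finset.card_erase_of_mem hv

lemma card_edges_delEdge {e : ℕ} (he : e ∈ G.edges) :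
    (G.delEdge e).edges.card = G.edges.card - 1 := Finset.card_erase_of_mem he

lemma size_delVert_lt {v : ℕ} (hv : v ∈ G.verts) : (G.delVert v).size < G.size := by
  have h1 : (G.delVert v).verts.card = G.verts.card - 1 := card_verts_delVert hv
  have h2 : (G.delVert v).edges.card ≤ G.edges.card := Finset.card_filter_le _ _
  have h3 : 1 ≤ G.verts.card := Finset.card_pos.mpr ⟨v, hv⟩
  unfold size; omega

lemma size_delEdge_lt {e : ℕ} (he : e ∈ G.edges) : (G.delEdge e).size < G.size := by
  have h1 : (G.edges.erase e).card = G.edges.card - 1 := Finset.card_erase_of_mem he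
  have h3 : 1 ≤ G.edges.card := Finset.card_pos.mpr ⟨e, he⟩
  unfold size delEdge; simp only; omega

lemma WF_delVert (hWF : G.WF) (v : ℕ) : (G.delVert v).WF := by
  intro e he w hw
  obtain ⟨heE, hnv⟩ := Finset.mem_filter.mp he
  have hw' : w ∈ G.verts := hWF e heE w hw
  refine Finset.mem_erase.mpr ⟨?_, hw'⟩
  rintro rfl; exact hnv hw

lemma WF_delEdge (hWF : G.WF) (e : ℕ) : (G.delEdge e).WF := by
  intro f hf w hw
  exact hWF f (Finset.mem_of_mem_erase hf) w hw

lemma Bip_delVert (hB : G.Bipartite) (v : ℕ) : (G.delVert v).Bipartite := by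
  obtain ⟨c, hc⟩ := hB
  exact ⟨c, fun e he u w h => hc e (Finset.mem_of_mem_filter _ he) u w h⟩

lemma Bip_delEdge (hB : G.Bipartite) (e : ℕ) : (G.delEdge e).Bipartite := by
  obtain ⟨c, hc⟩ := hB
  exact ⟨c, fun f hf u w h => hc f (Finset.mem_of_mem_erase hf) u w h⟩

lemma size_eq_zero (h : G.size = 0) : G.verts = ∅ ∧ G.edges = ∅ := by
  unfold size at h
  constructor <;> [exact Finset.card_eq_zero.mp (by omega); exact Finset.card_eq_zero.mp (by omega)]

lemma nimAux_eq_of_le : ∀ fuel (G : MGraph), G.size ≤ fuel → nimAux fuel G = nimAux G.size G := by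
  intro fuel
  induction fuel using Nat.strong_induction_on with
  | _ fuel IH =>
    intro G hG
    match fuel with
    | 0 =>
      have : G.size = 0 := Nat.le_zero.mp hG
      rw [this]
    | f + 1 =>
      rcases Nat.eq_zero_or_pos G.size with h0 | hpos
      · obtain ⟨hv, he⟩ := size_eq_zero h0
        rw [h0]
        show nimAux (f+1) G = nimAux 0 G
        simp [nimAux, hv, he, mex_empty]
      · obtain ⟨s, hs⟩ : ∃ s, G.size = s + 1 := ⟨G.size - 1, by omega⟩
        rw [hs]
        show mex _ = mex _
        congr 1
        have hsf : s ≤ f := by omega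
        have stepV : ∀ v ∈ G.verts, nimAux f (G.delVert v) = nimAux s (G.delVert v) := by
          intro v hv
          have hlt := size_delVert_lt hv
          rw [IH f (by omega) _ (by omega), IH s (by omega) _ (by omega)]
        have stepE : ∀ e ∈ G.edges, nimAux f (G.delEdge e) = nimAux s (G.delEdge e) := by
          intro e he
          have hlt := size_delEdge_lt he
          rw [IH f (by omega) _ (by omega), IH s (by omega) _ (by omega)]
        rw [Finset.image_congr (fun v hv => stepV v hv),
            Finset.image_congr (fun e he => stepE e he)]

lemma nim_eq_mex (hpos : 0 < G.size) :
    G.nim = mex ((G.verts.image fun v => (G.delVert v).nim) ∪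
                 (G.edges.image fun e => (G.delEdge e).nim)) := by
  obtain ⟨s, hs⟩ : ∃ s, G.size = s + 1 := ⟨G.size - 1, by omega⟩
  unfold nim
  rw [hs]
  show mex _ = mex _
  congr 1
  have hV : ∀ v ∈ G.verts, nimAux s (G.delVert v) = nimAux (G.delVert v).size (G.delVert v) := by
    intro v hv
    exact nimAux_eq_of_le s _ (by have := size_delVert_lt hv; omega)
  have hE : ∀ e ∈ G.edges, nimAux s (G.delEdge e) = nimAux (G.delEdge e).size (G.delEdge e) := by
    intro e he
    exact nimAux_eq_of_le s _ (by have := size_delEdge_lt he; omega)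
  rw [Finset.image_congr (fun v hv => hV v hv), Finset.image_congr (fun e he => hE e he)]

lemma card_filter_ends {c : ℕ → Bool} (hWF : G.WF)
    (hc : ∀ e ∈ G.edges, ∀ u v : ℕ, G.ends e = s(u, v) → c u ≠ c v)
    {e : ℕ} (he : e ∈ G.edges) :
    (G.verts.filter (fun v => v ∈ G.ends e)).card = 2 := by
  obtain ⟨a, b, hab, hcab⟩ := ends_eq_pair hc he
  have hne : a ≠ b := fun h => hcab (by rw [h])
  have ha : a ∈ G.verts := hWF e he a (by rw [hab]; exact Sym2.mem_mk_left a b)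
  have hb : b ∈ G.verts := hWF e he b (by rw [hab]; exact Sym2.mem_mk_right a b)
  have hset : G.verts.filter (fun v => v ∈ G.ends e) = {a, b} := by
    ext x
    simp only [Finset.mem_filter, hab, Sym2.mem_iff, Finset.mem_insert, Finset.mem_singleton]
    constructor
    · rintro ⟨-, h⟩; exact h
    · rintro (rfl | rfl)
      · exact ⟨ha, Or.inl rfl⟩
      · exact ⟨hb, Or.inr rfl⟩
  rw [hset, Finset.card_insert_of_notMem (by simp [hne]), Finset.card_singleton]

lemma handshake {c : ℕ → Bool} (hWF : G.WF)
    (hc : ∀ e ∈ G.edges, ∀ u v : ℕ, G.ends e = s(u, v) → c u ≠ c v) :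
    ∑ v ∈ G.verts, G.dcount v = 2 * G.edges.card := by
  calc ∑ v ∈ G.verts, G.dcount v
      = ∑ v ∈ G.verts, ∑ e ∈ G.edges, (if v ∈ G.ends e then 1 else 0) :=
        Finset.sum_congr rfl (fun v _ => Finset.card_filter _ _)
    _ = ∑ e ∈ G.edges, ∑ v ∈ G.verts, (if v ∈ G.ends e then 1 else 0) := Finset.sum_comm
    _ = ∑ e ∈ G.edges, (G.verts.filter (fun v => v ∈ G.ends e)).card :=
        Finset.sum_congr rfl (fun e _ => (Finset.card_filter _ _).symm)
    _ = ∑ e ∈ G.edges, 2 := Finset.sum_congr rfl (fun e he => card_filter_ends hWF hc he)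
    _ = 2 * G.edges.card := by simp [mul_comm]

lemma handshake_colored {c : ℕ → Bool} (hWF : G.WF)
    (hc : ∀ e ∈ G.edges, ∀ u v : ℕ, G.ends e = s(u, v) → c u ≠ c v) :
    ∑ v ∈ G.verts.filter (fun v => c v = true), G.dcount v = G.edges.card := by
  have key : ∀ e ∈ G.edges,
      ((G.verts.filter (fun v => c v = true)).filter (fun v => v ∈ G.ends e)).card = 1 := by
    intro e he
    have swap : ∀ a b : ℕ, G.ends e = s(a, b) → c a ≠ c b → c b = true →
        ((G.verts.filter (fun v => c v = true)).filter (fun v => v ∈ G.ends e)).card = 1 := by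
      intro a b hab hcab hcb
      have hne : a ≠ b := fun h => hcab (by rw [h])
      have ha : a ∈ G.verts := hWF e he a (by rw [hab]; exact Sym2.mem_mk_left a b)
      have hb : b ∈ G.verts := hWF e he b (by rw [hab]; exact Sym2.mem_mk_right a b)
      have hca : c a = false := by
        cases h2 : c a
        · rfl
        · exact absurd (h2.trans hcb.symm) hcab
      have hset : (G.verts.filter (fun v => c v = true)).filter (fun v => v ∈ G.ends e)
          = {b} := by
        ext x
        simp only [Finset.mem_filter, hab, Sym2.mem_iff, Finset.mem_singleton]
        constructor
        · rintro ⟨⟨hxv, hcx⟩, (rfl | rfl)⟩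
          · exact absurd hcx (by simp [hca])
          · rfl
        · rintro rfl; exact ⟨⟨hb, hcb⟩, Or.inr rfl⟩
      rw [hset, Finset.card_singleton]
    obtain ⟨a, b, hab, hcab⟩ := ends_eq_pair hc he
    cases h : c b
    · have hab2 : G.ends e = s(b, a) := by rw [hab]; exact Sym2.eq_swap
      have hca : c a = true := by
        cases h2 : c a
        · exact absurd (h2.trans h.symm) hcab
        · rfl
      exact swap b a hab2 (fun hh => hcab hh.symm) hca
    · exact swap a b hab hcab h
  calc ∑ v ∈ G.verts.filter (fun v => c v = true), G.dcount v
      = ∑ v ∈ G.verts.filter (fun v => c v = true), ∑ e ∈ G.edges,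
          (if v ∈ G.ends e then 1 else 0) :=
        Finset.sum_congr rfl (fun v _ => Finset.card_filter _ _)
    _ = ∑ e ∈ G.edges, ∑ v ∈ G.verts.filter (fun v => c v = true),
          (if v ∈ G.ends e then 1 else 0) := Finset.sum_comm
    _ = ∑ e ∈ G.edges, ((G.verts.filter (fun v => c v = true)).filter
          (fun v => v ∈ G.ends e)).card :=
        Finset.sum_congr rfl (fun e _ => (Finset.card_filter _ _).symm)
    _ = ∑ e ∈ G.edges, 1 := Finset.sum_congr rfl key
    _ = G.edges.card := by simp

lemma exists_even_dcount {c : ℕ → Bool} (hWF : G.WF)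
    (hc : ∀ e ∈ G.edges, ∀ u v : ℕ, G.ends e = s(u, v) → c u ≠ c v)
    (hodd : G.verts.card % 2 = 1) : ∃ v ∈ G.verts, G.dcount v % 2 = 0 := by
  by_contra h
  push_neg at h
  have hall : ∀ v ∈ G.verts, G.dcount v % 2 = 1 := fun v hv => by have := h v hv; omega
  have h1 : (∑ v ∈ G.verts, G.dcount v) % 2 = G.verts.card % 2 := by
    rw [Finset.sum_nat_mod, Finset.sum_congr rfl hall, Finset.sum_const, smul_eq_mul, mul_one]
  rw [handshake hWF hc] at h1
  omega

lemma exists_odd_dcount {c : ℕ → Bool} (hWF : G.WF)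
    (hc : ∀ e ∈ G.edges, ∀ u v : ℕ, G.ends e = s(u, v) → c u ≠ c v)
    (hodd : G.edges.card % 2 = 1) : ∃ v ∈ G.verts, G.dcount v % 2 = 1 := by
  by_contra h
  push_neg at h
  have hall : ∀ v ∈ G.verts.filter (fun v => c v = true), G.dcount v % 2 = 0 := by
    intro v hv
    have hv' := Finset.mem_of_mem_filter _ hv
    have := h v hv'; omega
  have h1 : (∑ v ∈ G.verts.filter (fun v => c v = true), G.dcount v) % 2 = 0 := by
    rw [Finset.sum_nat_mod, Finset.sum_congr rfl hall]
    simp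
  rw [handshake_colored hWF hc] at h1
  omega

lemma phi_delVert {v : ℕ} (hv : v ∈ G.verts) :
    (G.delVert v).phi = (G.verts.card - 1) % 2 + 2 * ((G.edges.card - G.dcount v) % 2) := by
  have h1 := card_verts_delVert (G := G) hv
  have h2 := dcount_sum (G := G) (v := v)
  unfold phi
  rw [h1]
  congr 2
  omega

lemma phi_delEdge {e : ℕ} (he : e ∈ G.edges) :
    (G.delEdge e).phi = G.verts.card % 2 + 2 * ((G.edges.card - 1) % 2) := by
  unfold phi
  rw [show (G.delEdge e).edges.card = G.edges.card - 1 from Finset.card_erase_of_mem he]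
  rfl

lemma nim_eq_phi_aux : ∀ n (G : MGraph), G.size ≤ n → G.WF → G.Bipartite → G.nim = G.phi := by
  intro n
  induction n with
  | zero =>
    intro G hsize hWF hBip
    have h0 : G.size = 0 := Nat.le_zero.mp hsize
    obtain ⟨hv, he⟩ := size_eq_zero h0
    unfold nim phi
    rw [h0]
    simp [nimAux, hv, he]
  | succ n IH =>
    intro G hsize hWF hBip
    rcases Nat.eq_zero_or_pos G.size with h0 | hpos
    · obtain ⟨hv, he⟩ := size_eq_zero h0
      unfold nim phi
      rw [h0]
      simp [nimAux, hv, he]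
    · obtain ⟨c, hc⟩ := hBip
      rw [nim_eq_mex hpos]
      have hV : ∀ v ∈ G.verts, (G.delVert v).nim = (G.delVert v).phi := fun v hv =>
        IH _ (by have := size_delVert_lt hv; omega) (WF_delVert hWF v)
          (Bip_delVert ⟨c, hc⟩ v)
      have hE : ∀ e ∈ G.edges, (G.delEdge e).nim = (G.delEdge e).phi := fun e he =>
        IH _ (by have := size_delEdge_lt he; omega) (WF_delEdge hWF e)
          (Bip_delEdge ⟨c, hc⟩ e)
      rw [Finset.image_congr (fun v hv => hV v hv), Finset.image_congr (fun e he => hE e he)]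
      set S := (G.verts.image fun v => (G.delVert v).phi) ∪
        (G.edges.image fun e => (G.delEdge e).phi) with hS
      apply mex_eq'
      · intro hmem
        rcases Finset.mem_union.mp hmem with h | h
        · obtain ⟨v, hv, heq⟩ := Finset.mem_image.mp h
          have heq2 : (G.delVert v).phi = G.phi := heq
          rw [phi_delVert hv] at heq2
          have hd := dcount_sum (G := G) (v := v)
          have hc1 : 1 ≤ G.verts.card := Finset.card_pos.mpr ⟨v, hv⟩
          unfold phi at heq2
          omega
        · obtain ⟨e, he, heq⟩ := Finset.mem_image.mp h
          have heq2 : (G.delEdge e).phi = G.phi := heq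
          rw [phi_delEdge he] at heq2
          have hc1 : 1 ≤ G.edges.card := Finset.card_pos.mpr ⟨e, he⟩
          unfold phi at heq2
          omega
      · intro j hj
        have memV : ∀ v ∈ G.verts, (G.delVert v).phi ∈ S :=
          fun v hv => Finset.mem_union_left _ (Finset.mem_image_of_mem _ hv)
        have memE : ∀ e ∈ G.edges, (G.delEdge e).phi ∈ S :=
          fun e he => Finset.mem_union_right _ (Finset.mem_image_of_mem _ he)
        unfold phi at hj
        have ha : G.verts.card % 2 = 0 ∨ G.verts.card % 2 = 1 := by omega
        have hb : G.edges.card % 2 = 0 ∨ G.edges.card % 2 = 1 := by omega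
        rcases ha with ha | ha <;> rcases hb with hb | hb
        · exact absurd hj (by omega)
        · -- V even, E odd : phi = 2, j ∈ {0, 1}
          have hm1 : 1 ≤ G.edges.card := by omega
          have hj2 : j = 0 ∨ j = 1 := by omega
          rcases hj2 with rfl | rfl
          · obtain ⟨e, he⟩ := Finset.card_pos.mp (show 0 < G.edges.card by omega)
            have : (G.delEdge e).phi = 0 := by rw [phi_delEdge he]; omega
            exact this ▸ memE e he
          · obtain ⟨v, hv, hdv⟩ := exists_odd_dcount hWF hc hb
            have hd := dcount_sum (G := G) (v := v)
            have hc1 : 1 ≤ G.verts.card := Finset.card_pos.mpr ⟨v, hv⟩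
            have : (G.delVert v).phi = 1 := by rw [phi_delVert hv]; omega
            exact this ▸ memV v hv
        · -- V odd, E even : phi = 1, j = 0
          have hj0 : j = 0 := by omega
          subst hj0
          obtain ⟨v, hv, hdv⟩ := exists_even_dcount hWF hc ha
          have hd := dcount_sum (G := G) (v := v)
          have : (G.delVert v).phi = 0 := by rw [phi_delVert hv]; omega
          exact this ▸ memV v hv
        · -- V odd, E odd : phi = 3, j ∈ {0, 1, 2}
          have hj3 : j = 0 ∨ j = 1 ∨ j = 2 := by omega
          rcases hj3 with rfl | rfl | rfl
          · obtain ⟨v, hv, hdv⟩ := exists_odd_dcount hWF hc hb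
            have hd := dcount_sum (G := G) (v := v)
            have : (G.delVert v).phi = 0 := by rw [phi_delVert hv]; omega
            exact this ▸ memV v hv
          · obtain ⟨e, he⟩ := Finset.card_pos.mp (show 0 < G.edges.card by omega)
            have : (G.delEdge e).phi = 1 := by rw [phi_delEdge he]; omega
            exact this ▸ memE e he
          · obtain ⟨v, hv, hdv⟩ := exists_even_dcount hWF hc ha
            have hd := dcount_sum (G := G) (v := v)
            have : (G.delVert v).phi = 2 := by rw [phi_delVert hv]; omega
            exact this ▸ memV v hv

end MGraph

open MGraph in
/-- If `G` is a finite bipartite graph (no odd cycles, no loops; multiple edges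
allowed), then the nim-value of the graph take-away game on `G` equals its
parity function: `ν(G) = φ(G)`. -/
theorem bipartite_nim_eq_phi (G : MGraph) (hWF : G.WF) (hBip : G.Bipartite) :
    G.nim = G.phi :=
  MGraph.nim_eq_phi_aux G.size G le_rfl hWF hBip
end
end

section
/- Let T and Y be trees with T ∩ Y = {b} and set D₁ := T ∪ Y; let U and Z be trees with U ∩ Z = {d} and set D₂ := U ∪ Z. Let a be a vertex of T, c a vertex of U, and let ψ : D₁ → D₂ be an isomorphism of trees with ψ(a) = c. If |V(Z)| ≥ |V(Y)|, then at least one of the following holds: ψ(Y) is contained in U with d not in ψ(Y); ψ(Y) is contained in Z with d not in ψ(Y); or ψ(b) = d. -/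
noncomputable section
open scoped Classical

namespace MGraph

/-- `D` is the union of the trees `X` and `Y`, which share exactly the single
vertex `b`. -/
def GluedAt (D X Y : MGraph) (b : ℕ) : Prop :=
  X.IsTree ∧ Y.IsTree ∧ X.verts ∩ Y.verts = {b} ∧
  Disjoint X.edges Y.edges ∧
  D.verts = X.verts ∪ Y.verts ∧ D.edges = X.edges ∪ Y.edges ∧
  (∀ e ∈ X.edges, D.ends e = X.ends e) ∧ (∀ e ∈ Y.edges, D.ends e = Y.ends e)

end MGraph

namespace MGraph

lemma GluedAt.symm' {D X Y : MGraph} {b : ℕ} (h : GluedAt D X Y b) :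
    GluedAt D Y X b := by
  obtain ⟨h1, h2, h3, h4, h5, h6, h7, h8⟩ := h
  refine ⟨h2, h1, by rw [Finset.inter_comm]; exact h3, h4.symm,
    by rw [Finset.union_comm]; exact h5, by rw [Finset.union_comm]; exact h6, h8, h7⟩

lemma stay {D₂ U Z : MGraph} {d : ℕ} (h₂ : GluedAt D₂ U Z d)
    {u v : ℕ} (hadj : D₂.Adj u v) (hu : u ∈ U.verts) (hud : u ≠ d) :
    v ∈ U.verts := by
  obtain ⟨hU, hZ, hinter, hdisj, hV, hE, hendsU, hendsZ⟩ := h₂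
  obtain ⟨e, he, hends⟩ := hadj
  rw [hE, Finset.mem_union] at he
  rcases he with he | he
  · have : v ∈ U.ends e := by
      rw [← hendsU e he, hends]; exact Sym2.mem_mk_right u v
    exact hU.1 e he v this
  · have : u ∈ Z.ends e := by
      rw [← hendsZ e he, hends]; exact Sym2.mem_mk_left u v
    have huZ : u ∈ Z.verts := hZ.1 e he u this
    have : u ∈ U.verts ∩ Z.verts := Finset.mem_inter.2 ⟨hu, huZ⟩
    rw [hinter, Finset.mem_singleton] at this
    exact absurd this hud

lemma mapped_adj {D₁ D₂ X : MGraph} (ψ : Iso D₁ D₂)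
    (hXE : X.edges ⊆ D₁.edges) (hXends : ∀ e ∈ X.edges, D₁.ends e = X.ends e)
    {u v : ℕ} (h : X.Adj u v) : D₂.Adj (ψ.vmap u) (ψ.vmap v) := by
  obtain ⟨e, he, hends⟩ := h
  refine ⟨ψ.emap e, ψ.emap_bij.mapsTo (hXE he), ?_⟩
  rw [ψ.ends_eq e (hXE he), hXends e he, hends, Sym2.map_pair_eq]

lemma mapped_reach {D₁ D₂ X U Z : MGraph} {d : ℕ} (ψ : Iso D₁ D₂)
    (hXE : X.edges ⊆ D₁.edges) (hXends : ∀ e ∈ X.edges, D₁.ends e = X.ends e)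
    (hXwf : X.WF) (h₂ : GluedAt D₂ U Z d)
    (havoid : ∀ s ∈ X.verts, ψ.vmap s ≠ d)
    {u v : ℕ} (hr : X.Reach u v) (hu : u ∈ X.verts) (hU : ψ.vmap u ∈ U.verts) :
    v ∈ X.verts ∧ ψ.vmap v ∈ U.verts := by
  induction hr with
  | refl => exact ⟨hu, hU⟩
  | tail hr hadj ih =>
    rename_i w x
    obtain ⟨hwX, hwU⟩ := ih
    have hxX : x ∈ X.verts := by
      obtain ⟨e, he, hends⟩ := hadj
      exact hXwf e he x (by rw [hends]; exact Sym2.mem_mk_right w x)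
    exact ⟨hxX, stay h₂ (mapped_adj ψ hXE hXends hadj) hwU (havoid w hwX)⟩

end MGraph

open MGraph in
/-- Let `T`, `Y` be trees with `T ∩ Y = {b}`, `D₁ = T ∪ Y`; let `U`, `Z` be
trees with `U ∩ Z = {d}`, `D₂ = U ∪ Z`; let `a ∈ T`, `c ∈ U` and let
`ψ : D₁(a) → D₂(c)` be an isomorphism of rooted trees.  If `|V(Z)| ≥ |V(Y)|`
then `ψ(Y) ⊆ U − d`, `ψ(Y) ⊆ Z − d`, or `ψ(b) = d`. -/
theorem three_possibilities (T Y U Z D₁ D₂ : MGraph) (a b c d : ℕ)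
    (h₁ : GluedAt D₁ T Y b) (h₂ : GluedAt D₂ U Z d)
    (ha : a ∈ T.verts) (hc : c ∈ U.verts)
    (ψ : Iso D₁ D₂) (hψ : ψ.vmap a = c)
    (hcard : Y.verts.card ≤ Z.verts.card) :
    (∀ y ∈ Y.verts, ψ.vmap y ∈ U.verts ∧ ψ.vmap y ≠ d) ∨
    (∀ y ∈ Y.verts, ψ.vmap y ∈ Z.verts ∧ ψ.vmap y ≠ d) ∨
    ψ.vmap b = d := by
  classical
  have h₂s := h₂.symm'
  obtain ⟨hT, hY, hTY, hdisj1, hV1, hE1, hTends, hYends⟩ := h₁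
  obtain ⟨hU, hZ, hUZ, hdisj2, hV2, hE2, hUends, hZends⟩ := h₂
  have hbT : b ∈ T.verts := by
    have : b ∈ T.verts ∩ Y.verts := by rw [hTY]; exact Finset.mem_singleton_self b
    exact (Finset.mem_inter.1 this).1
  have hbY : b ∈ Y.verts := by
    have : b ∈ T.verts ∩ Y.verts := by rw [hTY]; exact Finset.mem_singleton_self b
    exact (Finset.mem_inter.1 this).2
  have hdU : d ∈ U.verts := by
    have : d ∈ U.verts ∩ Z.verts := by rw [hUZ]; exact Finset.mem_singleton_self d
    exact (Finset.mem_inter.1 this).1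
  have hTE : T.edges ⊆ D₁.edges := by rw [hE1]; exact Finset.subset_union_left
  have hYE : Y.edges ⊆ D₁.edges := by rw [hE1]; exact Finset.subset_union_right
  by_cases hcase : ∃ y₀ ∈ Y.verts, ψ.vmap y₀ = d
  · obtain ⟨y₀, hy₀Y, hy₀d⟩ := hcase
    by_cases hy₀b : y₀ = b
    · exact Or.inr (Or.inr (hy₀b ▸ hy₀d))
    · exfalso
      have hy₀T : y₀ ∉ T.verts := by
        intro h
        have : y₀ ∈ T.verts ∩ Y.verts := Finset.mem_inter.2 ⟨h, hy₀Y⟩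
        rw [hTY, Finset.mem_singleton] at this
        exact hy₀b this
      have havoidT : ∀ t ∈ T.verts, ψ.vmap t ≠ d := by
        intro t ht heq
        apply hy₀T
        have ht1 : t ∈ D₁.verts := by rw [hV1]; exact Finset.mem_union_left _ ht
        have hy1 : (y₀ : ℕ) ∈ D₁.verts := by rw [hV1]; exact Finset.mem_union_right _ hy₀Y
        have := ψ.vmap_bij.injOn ht1 hy1 (by rw [heq, hy₀d])
        rwa [this] at ht
      have hTmaps : ∀ t ∈ T.verts, ψ.vmap t ∈ U.verts := by
        intro t ht
        exact (mapped_reach ψ hTE hTends hT.1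
          ⟨hU, hZ, hUZ, hdisj2, hV2, hE2, hUends, hZends⟩ havoidT
          (hT.2.1.2 a ha t ht) ha (hψ ▸ hc)).2
      -- cardinality contradiction
      have himg : T.verts.image ψ.vmap ⊆ U.verts.erase d := by
        intro x hx
        obtain ⟨t, ht, rfl⟩ := Finset.mem_image.1 hx
        exact Finset.mem_erase.2 ⟨havoidT t ht, hTmaps t ht⟩
      have hinjT : Set.InjOn ψ.vmap T.verts := by
        apply ψ.vmap_bij.injOn.mono
        intro x hx
        simp only [Finset.mem_coe] at hx ⊢
        rw [hV1]; exact Finset.mem_union_left _ hx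
      have hcardT : T.verts.card ≤ (U.verts.erase d).card := by
        rw [← Finset.card_image_of_injOn hinjT]
        exact Finset.card_le_card himg
      have hlt : T.verts.card < U.verts.card :=
        lt_of_le_of_lt hcardT (Finset.card_erase_lt_of_mem hdU)
      have hc1 : D₁.verts.card + 1 = T.verts.card + Y.verts.card := by
        have := Finset.card_union_add_card_inter T.verts Y.verts
        rw [hTY] at this
        simp only [Finset.card_singleton] at this
        rw [hV1]; omega
      have hc2 : D₂.verts.card + 1 = U.verts.card + Z.verts.card := by
        have := Finset.card_union_add_card_inter U.verts Z.verts
        rw [hUZ] at this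
        simp only [Finset.card_singleton] at this
        rw [hV2]; omega
      have hceq : D₁.verts.card = D₂.verts.card := by
        refine Finset.card_bij (fun x _ => ψ.vmap x) (fun x hx => ψ.vmap_bij.mapsTo hx)
          (fun x hx y hy h => ψ.vmap_bij.injOn hx hy h) ?_
        intro y hy
        obtain ⟨x, hx, hxy⟩ := ψ.vmap_bij.surjOn hy
        exact ⟨x, hx, hxy⟩
      omega
  · push_neg at hcase
    have hbD : b ∈ D₁.verts := by rw [hV1]; exact Finset.mem_union_left _ hbT
    have hψb : ψ.vmap b ∈ U.verts ∪ Z.verts := by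
      rw [← hV2]; exact ψ.vmap_bij.mapsTo hbD
    rcases Finset.mem_union.1 hψb with hbU | hbZ
    · left
      intro y hy
      refine ⟨(mapped_reach ψ hYE hYends hY.1
        ⟨hU, hZ, hUZ, hdisj2, hV2, hE2, hUends, hZends⟩ hcase
        (hY.2.1.2 b hbY y hy) hbY hbU).2, hcase y hy⟩
    · right; left
      intro y hy
      refine ⟨(mapped_reach ψ hYE hYends hY.1 h₂s hcase
        (hY.2.1.2 b hbY y hy) hbY hbZ).2, hcase y hy⟩
end
end

section
/- Let T and Y be trees with T ∩ Y = {b} and set D₁ := T ∪ Y; let U and Z be trees with U ∩ Z = {d} and set D₂ := U ∪ Z. Let a be a vertex of T and c a vertex of U. Suppose ψ : D₁ → D₂ is an isomorphism of trees with ψ(a) = c, and suppose θ : T → U is an isomorphism of trees with θ(a) = c and θ(b) = d. Then Y and Z are isomorphic as rooted trees, via an isomorphism sending b to d. -/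
noncomputable section
open scoped Classical

namespace MGraph

/-! ### Auxiliary walk lemmas -/

lemma walkLen_refl (G : MGraph) (u : ℕ) : G.WalkLen u u 0 :=
  ⟨fun _ => u, rfl, rfl, fun i hi => absurd hi (by omega)⟩

lemma walkLen_adj {G : MGraph} {u v : ℕ} (h : G.Adj u v) : G.WalkLen u v 1 := by
  refine ⟨fun i => if i = 0 then u else v, by simp, by simp, ?_⟩
  intro i hi
  have : i = 0 := by omega
  subst this
  simpa using h

lemma walkLen_concat {G : MGraph} {u v w m n : ℕ} (h1 : G.WalkLen u v m)
    (h2 : G.WalkLen v w n) : G.WalkLen u w (m + n) := by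
  obtain ⟨f, hf0, hfm, hfs⟩ := h1
  obtain ⟨g, hg0, hgn, hgs⟩ := h2
  refine ⟨fun i => if i < m then f i else g (i - m), ?_, ?_, ?_⟩
  · by_cases h : 0 < m
    · simpa [h] using hf0
    · have hm : m = 0 := by omega
      subst hm
      simpa using hg0.trans (hfm.symm.trans hf0)
  · have h : ¬ (m + n < m) := by omega
    simpa [h] using hgn
  · intro i hi
    by_cases h1' : i + 1 < m
    · have h2' : i < m := by omega
      simpa [h1', h2'] using hfs i h2'
    · by_cases h2' : i < m
      · have h3 : i + 1 = m := by omega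
        have := hfs i h2'
        rw [h3, hfm, ← hg0] at this
        have h4 : i + 1 - m = 0 := by omega
        simpa [h2', h1', h4] using this
      · have h3 : ¬ (i + 1 < m) := by omega
        have h4 : i + 1 - m = (i - m) + 1 := by omega
        have := hgs (i - m) (by omega)
        simpa [h2', h3, h4] using this

lemma reach_exists_walkLen {G : MGraph} {u v : ℕ} (h : G.Reach u v) :
    ∃ n, G.WalkLen u v n := by
  induction h with
  | refl => exact ⟨0, walkLen_refl G u⟩
  | tail _ hadj ih =>
      obtain ⟨n, hn⟩ := ih
      exact ⟨n + 1, walkLen_concat hn (walkLen_adj hadj)⟩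

lemma exists_walkLen_of_connected {G : MGraph} (hG : G.Connected) {u v : ℕ}
    (hu : u ∈ G.verts) (hv : v ∈ G.verts) : ∃ n, G.WalkLen u v n :=
  reach_exists_walkLen (hG.2 u hu v hv)

lemma edist_le {G : MGraph} {u v n : ℕ} (h : G.WalkLen u v n) : G.edist u v ≤ n :=
  Nat.sInf_le h

lemma walkLen_edist {G : MGraph} {u v : ℕ} (h : ∃ n, G.WalkLen u v n) :
    G.WalkLen u v (G.edist u v) := Nat.sInf_mem h

lemma edist_self (G : MGraph) (u : ℕ) : G.edist u u = 0 :=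
  Nat.le_zero.mp (edist_le (walkLen_refl G u))

lemma eq_of_edist_eq_zero {G : MGraph} {u v : ℕ} (h : ∃ n, G.WalkLen u v n)
    (h0 : G.edist u v = 0) : u = v := by
  have hw := walkLen_edist h
  rw [h0] at hw
  obtain ⟨f, h1, h2, _⟩ := hw
  rw [← h1, h2]

lemma edist_le_one_add {G : MGraph} {u u' v : ℕ} (hadj : G.Adj u u')
    (h : ∃ n, G.WalkLen u' v n) : G.edist u v ≤ 1 + G.edist u' v :=
  edist_le (walkLen_concat (walkLen_adj hadj) (walkLen_edist h))

lemma exists_walkLen_lazy {G : MGraph} :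
    ∀ (n u v : ℕ) (f : ℕ → ℕ), f 0 = u → f n = v →
      (∀ i < n, f i = f (i + 1) ∨ G.Adj (f i) (f (i + 1))) →
      ∃ m ≤ n, G.WalkLen u v m := by
  intro n
  induction n with
  | zero =>
      intro u v f h0 hn _
      exact ⟨0, le_refl 0, f, h0, hn, fun i hi => absurd hi (by omega)⟩
  | succ n ih =>
      intro u v f h0 hn hs
      obtain ⟨m, hm, hw⟩ := ih (f 1) v (fun i => f (i + 1)) rfl hn
        (fun i hi => hs (i + 1) (by omega))
      rcases hs 0 (by omega) with heq | hadj
      · refine ⟨m, by omega, ?_⟩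
        rwa [← h0, heq]
      · rw [h0] at hadj
        exact ⟨1 + m, by omega, walkLen_concat (walkLen_adj hadj) hw⟩

lemma walkLen_mono {G H : MGraph} (hadj : ∀ u v, G.Adj u v → H.Adj u v) {u v n : ℕ}
    (h : G.WalkLen u v n) : H.WalkLen u v n := by
  obtain ⟨f, h0, hn, hs⟩ := h
  exact ⟨f, h0, hn, fun i hi => hadj _ _ (hs i hi)⟩

/-! ### Sym2 helpers -/

lemma sym2_exists_rep (z : Sym2 ℕ) : ∃ x y, z = s(x, y) := by
  induction z using Sym2.ind with
  | _ x y => exact ⟨x, y, rfl⟩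

lemma sym2_map_congr {z : Sym2 ℕ} {f g : ℕ → ℕ} (h : ∀ x ∈ z, f x = g x) :
    z.map f = z.map g := by
  obtain ⟨x, y, rfl⟩ := sym2_exists_rep z
  rw [Sym2.map_pair_eq, Sym2.map_pair_eq, h x (Sym2.mem_mk_left x y),
    h y (Sym2.mem_mk_right x y)]

/-! ### BijOn (Finset) helpers -/

lemma bijOn_mapsTo {f : ℕ → ℕ} {s t : Finset ℕ} (h : Set.BijOn f ↑s ↑t) {x : ℕ}
    (hx : x ∈ s) : f x ∈ t :=
  Finset.mem_coe.mp (h.mapsTo (Finset.mem_coe.mpr hx))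

lemma bijOn_injOn {f : ℕ → ℕ} {s t : Finset ℕ} (h : Set.BijOn f ↑s ↑t) {x y : ℕ}
    (hx : x ∈ s) (hy : y ∈ s) (hxy : f x = f y) : x = y :=
  h.injOn (Finset.mem_coe.mpr hx) (Finset.mem_coe.mpr hy) hxy

lemma bijOn_surjOn {f : ℕ → ℕ} {s t : Finset ℕ} (h : Set.BijOn f ↑s ↑t) {y : ℕ}
    (hy : y ∈ t) : ∃ x ∈ s, f x = y := by
  obtain ⟨x, hx, hfx⟩ := h.surjOn (Finset.mem_coe.mpr hy)
  exact ⟨x, Finset.mem_coe.mp hx, hfx⟩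

lemma bijOn_card {f : ℕ → ℕ} {s t : Finset ℕ} (h : Set.BijOn f ↑s ↑t) :
    s.card = t.card := by
  refine Finset.card_bij (fun a _ => f a) (fun a ha => bijOn_mapsTo h ha)
    (fun a₁ h₁ a₂ h₂ hEq => bijOn_injOn h h₁ h₂ hEq) ?_
  intro b hb
  obtain ⟨x, hx, hfx⟩ := bijOn_surjOn h hb
  exact ⟨x, hx, hfx⟩


/-! ### Glued graph lemmas -/

section Glue

variable {D X Y : MGraph} {b : ℕ}

lemma GluedAt.b_mem_left (h : GluedAt D X Y b) : b ∈ X.verts := by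
  have hb : b ∈ X.verts ∩ Y.verts := by
    rw [h.2.2.1]; exact Finset.mem_singleton_self b
  exact (Finset.mem_inter.mp hb).1

lemma GluedAt.b_mem_right (h : GluedAt D X Y b) : b ∈ Y.verts := by
  have hb : b ∈ X.verts ∩ Y.verts := by
    rw [h.2.2.1]; exact Finset.mem_singleton_self b
  exact (Finset.mem_inter.mp hb).2

lemma GluedAt.eq_b (h : GluedAt D X Y b) {u : ℕ} (hX : u ∈ X.verts)
    (hY : u ∈ Y.verts) : u = b := by
  have : u ∈ X.verts ∩ Y.verts := Finset.mem_inter.mpr ⟨hX, hY⟩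
  rw [h.2.2.1] at this
  exact Finset.mem_singleton.mp this

lemma GluedAt.wf (h : GluedAt D X Y b) : D.WF := by
  intro e he v hv
  rw [h.2.2.2.2.2.1, Finset.mem_union] at he
  rw [h.2.2.2.2.1, Finset.mem_union]
  rcases he with he | he
  · rw [h.2.2.2.2.2.2.1 e he] at hv
    exact Or.inl (h.1.1 e he v hv)
  · rw [h.2.2.2.2.2.2.2 e he] at hv
    exact Or.inr (h.2.1.1 e he v hv)

lemma GluedAt.adj_left (h : GluedAt D X Y b) {u v : ℕ} (hA : X.Adj u v) :
    D.Adj u v := by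
  obtain ⟨e, he, hends⟩ := hA
  refine ⟨e, ?_, ?_⟩
  · rw [h.2.2.2.2.2.1]; exact Finset.mem_union_left _ he
  · rw [h.2.2.2.2.2.2.1 e he, hends]

lemma GluedAt.adj_right (h : GluedAt D X Y b) {u v : ℕ} (hA : Y.Adj u v) :
    D.Adj u v := by
  obtain ⟨e, he, hends⟩ := hA
  refine ⟨e, ?_, ?_⟩
  · rw [h.2.2.2.2.2.1]; exact Finset.mem_union_right _ he
  · rw [h.2.2.2.2.2.2.2 e he, hends]

lemma GluedAt.walk_compress_left (h : GluedAt D X Y b) {u v n : ℕ}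
    (hu : u ∈ X.verts) (hv : v ∈ X.verts) (hw : D.WalkLen u v n) :
    ∃ m ≤ n, X.WalkLen u v m := by
  obtain ⟨f, h0, hn, hs⟩ := hw
  have hrY : ∀ w ∈ Y.verts,
      (if w ∈ X.verts then w else b) = b := by
    intro w hw'
    by_cases hwX : w ∈ X.verts
    · simp [hwX, h.eq_b hwX hw']
    · simp [hwX]
  apply exists_walkLen_lazy n u v (fun i => if f i ∈ X.verts then f i else b)
  · simp [h0, hu]
  · simp [hn, hv]
  · intro i hi
    obtain ⟨e, he, hends⟩ := hs i hi
    rw [h.2.2.2.2.2.1, Finset.mem_union] at he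
    rcases he with heX | heY
    · right
      have hendsX : X.ends e = s(f i, f (i + 1)) := by
        rw [← h.2.2.2.2.2.2.1 e heX, hends]
      have h1 : f i ∈ X.verts := h.1.1 e heX _ (by rw [hendsX]; exact Sym2.mem_mk_left _ _)
      have h2 : f (i + 1) ∈ X.verts := h.1.1 e heX _ (by rw [hendsX]; exact Sym2.mem_mk_right _ _)
      simp only [h1, h2, if_pos]
      exact ⟨e, heX, hendsX⟩
    · left
      have hendsY : Y.ends e = s(f i, f (i + 1)) := by
        rw [← h.2.2.2.2.2.2.2 e heY, hends]
      have h1 : f i ∈ Y.verts := h.2.1.1 e heY _ (by rw [hendsY]; exact Sym2.mem_mk_left _ _)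
      have h2 : f (i + 1) ∈ Y.verts := h.2.1.1 e heY _ (by rw [hendsY]; exact Sym2.mem_mk_right _ _)
      rw [hrY _ h1, hrY _ h2]

lemma GluedAt.edist_left (h : GluedAt D X Y b) {u v : ℕ}
    (hu : u ∈ X.verts) (hv : v ∈ X.verts) : D.edist u v = X.edist u v := by
  have hex : ∃ n, X.WalkLen u v n := exists_walkLen_of_connected h.1.2.1 hu hv
  have hDw : D.WalkLen u v (X.edist u v) :=
    walkLen_mono (fun _ _ => h.adj_left) (walkLen_edist hex)
  apply le_antisymm
  · exact edist_le hDw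
  · obtain ⟨m, hm, hw⟩ := h.walk_compress_left hu hv (walkLen_edist ⟨_, hDw⟩)
    exact le_trans (edist_le hw) hm

lemma GluedAt.exists_walk_cross (h : GluedAt D X Y b) {u w : ℕ}
    (hu : u ∈ X.verts) (hw : w ∈ Y.verts) : ∃ n, D.WalkLen u w n := by
  obtain ⟨m, hm⟩ := exists_walkLen_of_connected h.1.2.1 hu h.b_mem_left
  obtain ⟨n, hn⟩ := exists_walkLen_of_connected h.2.1.2.1 h.b_mem_right hw
  exact ⟨m + n, walkLen_concat (walkLen_mono (fun _ _ => h.adj_left) hm)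
    (walkLen_mono (fun _ _ => h.adj_right) hn)⟩

lemma GluedAt.edist_add (h : GluedAt D X Y b) {w : ℕ} (hw : w ∈ Y.verts) :
    ∀ n u, D.WalkLen u w n →
      (u ∈ X.verts → X.edist u b + Y.edist b w ≤ n) ∧
      (u ∈ Y.verts → Y.edist u w ≤ n) := by
  intro n
  induction n with
  | zero =>
      intro u hwalk
      obtain ⟨f, h0, hn, _⟩ := hwalk
      have huw : u = w := by rw [← h0, hn]
      constructor
      · intro hu
        have hub : u = b := h.eq_b hu (huw ▸ hw)
        rw [hub] at huw
        rw [hub, ← huw, edist_self, edist_self]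
      · intro _
        rw [huw, edist_self]
  | succ n ih =>
      intro u hwalk
      obtain ⟨f, h0, hn, hs⟩ := hwalk
      have hwalk' : D.WalkLen (f 1) w n :=
        ⟨fun i => f (i + 1), rfl, hn, fun i hi => hs (i + 1) (by omega)⟩
      have hadj : D.Adj u (f 1) := by
        have := hs 0 (by omega)
        rwa [h0] at this
      obtain ⟨e, he, hends⟩ := hadj
      rw [h.2.2.2.2.2.1, Finset.mem_union] at he
      have IH := ih (f 1) hwalk'
      rcases he with heX | heY
      · have hendsX : X.ends e = s(u, f 1) := by
          rw [← h.2.2.2.2.2.2.1 e heX, hends]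
        have hu1 : u ∈ X.verts := h.1.1 e heX _ (by rw [hendsX]; exact Sym2.mem_mk_left _ _)
        have hu2 : f 1 ∈ X.verts := h.1.1 e heX _ (by rw [hendsX]; exact Sym2.mem_mk_right _ _)
        have hXadj : X.Adj u (f 1) := ⟨e, heX, hendsX⟩
        have t1 : X.edist u b ≤ 1 + X.edist (f 1) b :=
          edist_le_one_add hXadj (exists_walkLen_of_connected h.1.2.1 hu2 h.b_mem_left)
        have t2 := IH.1 hu2
        constructor
        · intro _; omega
        · intro hu'
          have hub : u = b := h.eq_b hu1 hu'
          have hb0 : Y.edist u w ≤ Y.edist b w := by rw [hub]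
          omega
      · have hendsY : Y.ends e = s(u, f 1) := by
          rw [← h.2.2.2.2.2.2.2 e heY, hends]
        have hu1 : u ∈ Y.verts := h.2.1.1 e heY _ (by rw [hendsY]; exact Sym2.mem_mk_left _ _)
        have hu2 : f 1 ∈ Y.verts := h.2.1.1 e heY _ (by rw [hendsY]; exact Sym2.mem_mk_right _ _)
        have hYadj : Y.Adj u (f 1) := ⟨e, heY, hendsY⟩
        have t1 : Y.edist u w ≤ 1 + Y.edist (f 1) w :=
          edist_le_one_add hYadj (exists_walkLen_of_connected h.2.1.2.1 hu2 hw)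
        have t2 := IH.2 hu2
        constructor
        · intro hu'
          have hub : u = b := h.eq_b hu' hu1
          have e0 : X.edist u b = 0 := by rw [hub, edist_self]
          have hb0 : Y.edist b w ≤ Y.edist u w := by rw [hub]
          omega
        · intro _; omega

end Glue

/-! ### Iso lemmas -/

lemma Iso.walk_map {G H : MGraph} (φ : Iso G H) {u v n : ℕ} (hw : G.WalkLen u v n) :
    H.WalkLen (φ.vmap u) (φ.vmap v) n := by
  obtain ⟨f, h0, hn, hs⟩ := hw
  refine ⟨fun i => φ.vmap (f i), by show φ.vmap (f 0) = _; rw [h0],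
    by show φ.vmap (f n) = _; rw [hn], ?_⟩
  intro i hi
  obtain ⟨e, he, hends⟩ := hs i hi
  refine ⟨φ.emap e, bijOn_mapsTo φ.emap_bij he, ?_⟩
  rw [φ.ends_eq e he, hends, Sym2.map_pair_eq]

lemma Iso.walk_pull {G H : MGraph} (φ : Iso G H) (hGwf : G.WF) {u v : ℕ}
    (hu : u ∈ G.verts) (hv : v ∈ G.verts) {n : ℕ}
    (hw : H.WalkLen (φ.vmap u) (φ.vmap v) n) : G.WalkLen u v n := by
  classical
  obtain ⟨g, hg0, hgn, hgs⟩ := hw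
  set f : ℕ → ℕ := fun i => if i = 0 then u else Function.invFunOn φ.vmap ↑G.verts (g i)
    with hf
  have hpre : ∀ i, 1 ≤ i → i ≤ n → ∃ x ∈ G.verts, φ.vmap x = g i := by
    intro i h1 h2
    obtain ⟨ε, hε, hends⟩ := hgs (i - 1) (by omega)
    obtain ⟨e, he, hee⟩ := bijOn_surjOn φ.emap_bij hε
    obtain ⟨x, y, hxy⟩ := sym2_exists_rep (G.ends e)
    have hΦ := φ.ends_eq e he
    rw [← hee, hΦ, hxy, Sym2.map_pair_eq] at hends
    have hi' : i - 1 + 1 = i := by omega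
    rw [hi'] at hends
    rcases Sym2.eq_iff.mp hends with ⟨_, hy⟩ | ⟨hx, _⟩
    · exact ⟨y, hGwf e he y (hxy ▸ Sym2.mem_mk_right x y), hy⟩
    · exact ⟨x, hGwf e he x (hxy ▸ Sym2.mem_mk_left x y), hx⟩
  have hfm : ∀ i ≤ n, f i ∈ G.verts ∧ φ.vmap (f i) = g i := by
    intro i hi
    by_cases hi0 : i = 0
    · subst hi0
      simp only [hf, if_pos rfl]
      exact ⟨hu, hg0.symm⟩
    · obtain ⟨x, hx, hgx⟩ := hpre i (by omega) hi
      have hex : ∃ a ∈ (↑G.verts : Set ℕ), φ.vmap a = g i :=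
        ⟨x, Finset.mem_coe.mpr hx, hgx⟩
      have h1 := Function.invFunOn_mem hex
      have h2 := Function.invFunOn_eq hex
      simp only [hf, if_neg hi0]
      exact ⟨Finset.mem_coe.mp h1, h2⟩
  refine ⟨f, by simp [hf], ?_, ?_⟩
  · by_cases hn0 : n = 0
    · subst hn0
      simp only [hf, if_pos rfl]
      exact bijOn_injOn φ.vmap_bij hu hv (by rw [← hg0, hgn])
    · have hfn := hfm n le_rfl
      exact bijOn_injOn φ.vmap_bij hfn.1 hv (by rw [hfn.2, hgn])
  · intro i hi
    obtain ⟨ε, hε, hends⟩ := hgs i hi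
    obtain ⟨e, he, hee⟩ := bijOn_surjOn φ.emap_bij hε
    obtain ⟨x, y, hxy⟩ := sym2_exists_rep (G.ends e)
    have hΦ := φ.ends_eq e he
    rw [← hee, hΦ, hxy, Sym2.map_pair_eq] at hends
    have hfi := hfm i (by omega)
    have hfi1 := hfm (i + 1) (by omega)
    have hx : x ∈ G.verts := hGwf e he x (hxy ▸ Sym2.mem_mk_left x y)
    have hy : y ∈ G.verts := hGwf e he y (hxy ▸ Sym2.mem_mk_right x y)
    refine ⟨e, he, ?_⟩
    rw [hxy]
    rcases Sym2.eq_iff.mp hends with ⟨h1, h2⟩ | ⟨h1, h2⟩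
    · rw [bijOn_injOn φ.vmap_bij hx hfi.1 (by rw [h1, hfi.2]),
        bijOn_injOn φ.vmap_bij hy hfi1.1 (by rw [h2, hfi1.2])]
    · rw [bijOn_injOn φ.vmap_bij hx hfi1.1 (by rw [h1, hfi1.2]),
        bijOn_injOn φ.vmap_bij hy hfi.1 (by rw [h2, hfi.2])]
      exact Sym2.eq_swap

lemma Iso.edist_map {G H : MGraph} (φ : Iso G H) (hGwf : G.WF) {u v : ℕ}
    (hu : u ∈ G.verts) (hv : v ∈ G.verts) :
    H.edist (φ.vmap u) (φ.vmap v) = G.edist u v := by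
  have : {n | H.WalkLen (φ.vmap u) (φ.vmap v) n} = {n | G.WalkLen u v n} := by
    ext n
    exact ⟨fun hw => φ.walk_pull hGwf hu hv hw, fun hw => φ.walk_map hw⟩
  unfold edist
  rw [this]

/-! ### Chain machinery -/

noncomputable def chainStop (σ : ℕ → ℕ) (S : Finset ℕ) (x : ℕ) : ℕ :=
  sInf {n | σ^[n] x ∈ S}

noncomputable def chainMap (σ : ℕ → ℕ) (S : Finset ℕ) (x : ℕ) : ℕ :=
  σ^[chainStop σ S x] x

lemma chainMap_def (σ : ℕ → ℕ) (S : Finset ℕ) (x : ℕ) :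
    chainMap σ S x = σ^[chainStop σ S x] x := rfl

lemma chainMap_mem {σ : ℕ → ℕ} {S : Finset ℕ} {x : ℕ} (h : ∃ n, σ^[n] x ∈ S) :
    chainMap σ S x ∈ S := Nat.sInf_mem h

lemma chainStop_notMem {σ : ℕ → ℕ} {S : Finset ℕ} {x j : ℕ}
    (hj : j < chainStop σ S x) : σ^[j] x ∉ S := by
  unfold chainStop at hj
  intro hmem
  exact Nat.notMem_of_lt_sInf hj hmem

lemma chainStop_le {σ : ℕ → ℕ} {S : Finset ℕ} {x n : ℕ} (hn : σ^[n] x ∈ S) :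
    chainStop σ S x ≤ n := Nat.sInf_le hn

lemma exists_iterate_repeat (σ : ℕ → ℕ) (S : Finset ℕ) (x : ℕ)
    (h : ∀ n, σ^[n] x ∈ S) : ∃ i j, i < j ∧ σ^[i] x = σ^[j] x := by
  have hni : ¬ Function.Injective (fun n => σ^[n] x) := by
    intro hinj
    exact (Set.not_infinite.mpr S.finite_toSet)
      (Set.infinite_of_injective_forall_mem hinj (fun n => Finset.mem_coe.mpr (h n)))
  rw [Function.not_injective_iff] at hni
  obtain ⟨i, j, hEq, hne⟩ := hni
  rcases hne.lt_or_gt with h' | h'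
  · exact ⟨i, j, h', hEq⟩
  · exact ⟨j, i, h', hEq.symm⟩

lemma iterate_cancel {σ : ℕ → ℕ} {S : Finset ℕ}
    (hinj : ∀ x ∈ S, ∀ y ∈ S, σ x = σ y → x = y) :
    ∀ (m : ℕ) (x y : ℕ), (∀ j < m, σ^[j] x ∈ S) → (∀ j < m, σ^[j] y ∈ S) →
      σ^[m] x = σ^[m] y → x = y := by
  intro m
  induction m with
  | zero => intro x y _ _ h; simpa using h
  | succ m ih =>
      intro x y hx hy hEq
      rw [Function.iterate_succ_apply', Function.iterate_succ_apply'] at hEq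
      have := hinj _ (hx m (by omega)) _ (hy m (by omega)) hEq
      exact ih x y (fun j hj => hx j (by omega)) (fun j hj => hy j (by omega)) this

end MGraph

open MGraph in
/-- Let `T`, `Y` be trees with `T ∩ Y = {b}`, `D₁ = T ∪ Y`; let `U`, `Z` be
trees with `U ∩ Z = {d}`, `D₂ = U ∪ Z`; let `a ∈ T`, `c ∈ U`.  If
`ψ : D₁(a) → D₂(c)` and `θ : T(a) → U(c)` are isomorphisms of rooted trees and
`θ(b) = d`, then `Y(b) ≅ Z(d)` as rooted trees. -/
theorem rooted_iso_of_glued_iso (T Y U Z D₁ D₂ : MGraph) (a b c d : ℕ)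
    (h₁ : GluedAt D₁ T Y b) (h₂ : GluedAt D₂ U Z d)
    (ha : a ∈ T.verts) (hc : c ∈ U.verts)
    (ψ : Iso D₁ D₂) (hψ : ψ.vmap a = c)
    (θ : Iso T U) (hθa : θ.vmap a = c) (hθb : θ.vmap b = d) :
    ∃ χ : Iso Y Z, χ.vmap b = d := by
  classical
  have hTt : T.IsTree := h₁.1
  have hYt : Y.IsTree := h₁.2.1
  have hUt : U.IsTree := h₂.1
  have hZt : Z.IsTree := h₂.2.1
  have hTYe : Disjoint T.edges Y.edges := h₁.2.2.2.1
  have hUZe : Disjoint U.edges Z.edges := h₂.2.2.2.1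
  have hD1v : D₁.verts = T.verts ∪ Y.verts := h₁.2.2.2.2.1
  have hD2v : D₂.verts = U.verts ∪ Z.verts := h₂.2.2.2.2.1
  have hD1e : D₁.edges = T.edges ∪ Y.edges := h₁.2.2.2.2.2.1
  have hD2e : D₂.edges = U.edges ∪ Z.edges := h₂.2.2.2.2.2.1
  have hD1T : ∀ e ∈ T.edges, D₁.ends e = T.ends e := h₁.2.2.2.2.2.2.1
  have hD1Y : ∀ e ∈ Y.edges, D₁.ends e = Y.ends e := h₁.2.2.2.2.2.2.2
  have hD2U : ∀ e ∈ U.edges, D₂.ends e = U.ends e := h₂.2.2.2.2.2.2.1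
  have hD2Z : ∀ e ∈ Z.edges, D₂.ends e = Z.ends e := h₂.2.2.2.2.2.2.2
  have hbT : b ∈ T.verts := h₁.b_mem_left
  have hbY : b ∈ Y.verts := h₁.b_mem_right
  have hdU : d ∈ U.verts := h₂.b_mem_left
  have hdZ : d ∈ Z.verts := h₂.b_mem_right
  have hTwf : T.WF := hTt.1
  have hYwf : Y.WF := hYt.1
  have hUwf : U.WF := hUt.1
  have hZwf : Z.WF := hZt.1
  have hD1wf : D₁.WF := h₁.wf
  have hTsub : ∀ t ∈ T.verts, t ∈ D₁.verts := fun t ht => by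
    rw [hD1v]; exact Finset.mem_union_left _ ht
  have hYsub : ∀ t ∈ Y.verts, t ∈ D₁.verts := fun t ht => by
    rw [hD1v]; exact Finset.mem_union_right _ ht
  have hTEsub : ∀ e ∈ T.edges, e ∈ D₁.edges := fun e he => by
    rw [hD1e]; exact Finset.mem_union_left _ he
  have hYEsub : ∀ e ∈ Y.edges, e ∈ D₁.edges := fun e he => by
    rw [hD1e]; exact Finset.mem_union_right _ he
  have haD : a ∈ D₁.verts := hTsub a ha
  -- inverse of θ
  set θi : ℕ → ℕ := Function.invFunOn θ.vmap ↑T.verts with hθidef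
  set θiE : ℕ → ℕ := Function.invFunOn θ.emap ↑T.edges with hθiEdef
  set σv : ℕ → ℕ := fun x => ψ.vmap (θi x) with hσvdef
  set σe : ℕ → ℕ := fun f => ψ.emap (θiE f) with hσedef
  have hθi_spec : ∀ x ∈ U.verts, θi x ∈ T.verts ∧ θ.vmap (θi x) = x := by
    intro x hx
    obtain ⟨t, ht, htx⟩ := bijOn_surjOn θ.vmap_bij hx
    have hex : ∃ s ∈ (↑T.verts : Set ℕ), θ.vmap s = x := ⟨t, Finset.mem_coe.mpr ht, htx⟩
    exact ⟨Finset.mem_coe.mp (Function.invFunOn_mem hex), Function.invFunOn_eq hex⟩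
  have hθiE_spec : ∀ f ∈ U.edges, θiE f ∈ T.edges ∧ θ.emap (θiE f) = f := by
    intro f hf
    obtain ⟨g, hg, hgf⟩ := bijOn_surjOn θ.emap_bij hf
    have hex : ∃ s ∈ (↑T.edges : Set ℕ), θ.emap s = f := ⟨g, Finset.mem_coe.mpr hg, hgf⟩
    exact ⟨Finset.mem_coe.mp (Function.invFunOn_mem hex), Function.invFunOn_eq hex⟩
  have hθi_left : ∀ t ∈ T.verts, θi (θ.vmap t) = t := by
    intro t ht
    have h1 := hθi_spec (θ.vmap t) (bijOn_mapsTo θ.vmap_bij ht)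
    exact bijOn_injOn θ.vmap_bij h1.1 ht h1.2
  -- distance facts
  have F_dist : ∀ v ∈ D₁.verts, D₂.edist c (ψ.vmap v) = D₁.edist a v := by
    intro v hv
    have := ψ.edist_map hD1wf haD hv
    rwa [hψ] at this
  have hcd : D₂.edist c d = T.edist a b := by
    have h1' : D₂.edist c d = U.edist c d := h₂.edist_left hc hdU
    have h2' : U.edist (θ.vmap a) (θ.vmap b) = T.edist a b := θ.edist_map hTwf ha hbT
    rw [hθa, hθb] at h2'
    rw [h1', h2']
  have hsd : ∀ x ∈ U.verts, σv x ∈ D₂.verts ∧ D₂.edist c (σv x) = D₂.edist c x := by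
    intro x hx
    obtain ⟨ht, htx⟩ := hθi_spec x hx
    constructor
    · exact bijOn_mapsTo ψ.vmap_bij (hTsub _ ht)
    · have e1 : D₂.edist c (ψ.vmap (θi x)) = D₁.edist a (θi x) := F_dist _ (hTsub _ ht)
      have e2 : D₁.edist a (θi x) = T.edist a (θi x) := h₁.edist_left ha ht
      have e3 : U.edist (θ.vmap a) (θ.vmap (θi x)) = T.edist a (θi x) := θ.edist_map hTwf ha ht
      rw [hθa, htx] at e3
      have e4 : D₂.edist c x = U.edist c x := h₂.edist_left hc hx
      show D₂.edist c (ψ.vmap (θi x)) = D₂.edist c x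
      omega
  have hs_inj : ∀ x ∈ U.verts, ∀ y ∈ U.verts, σv x = σv y → x = y := by
    intro x hx y hy hEq
    obtain ⟨htx, htx2⟩ := hθi_spec x hx
    obtain ⟨hty, hty2⟩ := hθi_spec y hy
    have : θi x = θi y := bijOn_injOn ψ.vmap_bij (hTsub _ htx) (hTsub _ hty) hEq
    rw [← htx2, ← hty2, this]
  have hs_b : ∀ x ∈ U.verts, ∀ w ∈ Y.verts, σv x = ψ.vmap w → w = b ∧ x = d := by
    intro x hx w hw hEq
    obtain ⟨htx, htx2⟩ := hθi_spec x hx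
    have hiw : θi x = w := bijOn_injOn ψ.vmap_bij (hTsub _ htx) (hYsub _ hw) hEq
    have hwb : w = b := h₁.eq_b (hiw ▸ htx) hw
    refine ⟨hwb, ?_⟩
    rw [← htx2, hiw, hwb, hθb]
  -- edge analogues
  have hse_mem : ∀ f ∈ U.edges, σe f ∈ D₂.edges := by
    intro f hf
    exact bijOn_mapsTo ψ.emap_bij (hTEsub _ (hθiE_spec f hf).1)
  have hse_ends : ∀ f ∈ U.edges, D₂.ends (σe f) = (D₂.ends f).map σv := by
    intro f hf
    obtain ⟨hg, hgf⟩ := hθiE_spec f hf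
    have e1 : D₂.ends (ψ.emap (θiE f)) = (D₁.ends (θiE f)).map ψ.vmap :=
      ψ.ends_eq _ (hTEsub _ hg)
    have e2 : D₁.ends (θiE f) = T.ends (θiE f) := hD1T _ hg
    have e3 : U.ends (θ.emap (θiE f)) = (T.ends (θiE f)).map θ.vmap := θ.ends_eq _ hg
    rw [hgf] at e3
    have e4 : D₂.ends f = U.ends f := hD2U f hf
    show D₂.ends (ψ.emap (θiE f)) = (D₂.ends f).map σv
    rw [e1, e2, e4, e3, Sym2.map_map]
    apply sym2_map_congr
    intro x hxm
    have hxT : x ∈ T.verts := hTwf _ hg x hxm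
    show ψ.vmap x = σv (θ.vmap x)
    show ψ.vmap x = ψ.vmap (θi (θ.vmap x))
    rw [hθi_left x hxT]
  have hse_inj : ∀ x ∈ U.edges, ∀ y ∈ U.edges, σe x = σe y → x = y := by
    intro x hx y hy hEq
    obtain ⟨htx, htx2⟩ := hθiE_spec x hx
    obtain ⟨hty, hty2⟩ := hθiE_spec y hy
    have : θiE x = θiE y := bijOn_injOn ψ.emap_bij (hTEsub _ htx) (hTEsub _ hty) hEq
    rw [← htx2, ← hty2, this]
  have hse_notY : ∀ f ∈ U.edges, ∀ e' ∈ Y.edges, σe f = ψ.emap e' → False := by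
    intro f hf e' he' hEq
    obtain ⟨htf, _⟩ := hθiE_spec f hf
    have : θiE f = e' := bijOn_injOn ψ.emap_bij (hTEsub _ htf) (hYEsub _ he') hEq
    exact (Finset.disjoint_left.mp hTYe (this ▸ htf)) he'
  -- vertex chains
  have chain_mem : ∀ u ∈ D₁.verts, ∀ n, (∀ j < n, σv^[j] (ψ.vmap u) ∈ U.verts) →
      σv^[n] (ψ.vmap u) ∈ D₂.verts ∧
      D₂.edist c (σv^[n] (ψ.vmap u)) = D₁.edist a u := by
    intro u hu n
    induction n with
    | zero =>
        intro _
        simp only [Function.iterate_zero_apply]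
        exact ⟨bijOn_mapsTo ψ.vmap_bij hu, F_dist u hu⟩
    | succ n ih =>
        intro hU
        have hprev := ih (fun j hj => hU j (by omega))
        have hUn := hU n (by omega)
        rw [Function.iterate_succ_apply']
        obtain ⟨m1, m2⟩ := hsd _ hUn
        exact ⟨m1, by rw [m2, hprev.2]⟩
  have memU_of_notZ : ∀ u ∈ D₁.verts, ∀ n, (∀ j < n, σv^[j] (ψ.vmap u) ∉ Z.verts) →
      ∀ j < n, σv^[j] (ψ.vmap u) ∈ U.verts := by
    intro u hu n hnZ j
    induction j using Nat.strong_induction_on with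
    | _ j ihj =>
        intro hj
        have hD : σv^[j] (ψ.vmap u) ∈ D₂.verts :=
          (chain_mem u hu j (fun i hi => ihj i hi (by omega))).1
        have hnZ' := hnZ j hj
        rw [hD2v, Finset.mem_union] at hD
        tauto
  have exists_hit : ∀ u ∈ Y.verts, ∃ n, σv^[n] (ψ.vmap u) ∈ Z.verts := by
    intro u hu
    by_contra hnone
    push_neg at hnone
    have hallU : ∀ j, σv^[j] (ψ.vmap u) ∈ U.verts :=
      fun j => memU_of_notZ u (hYsub u hu) (j + 1) (fun i _ => hnone i) j (by omega)
    obtain ⟨i, j, hij, hEq⟩ := exists_iterate_repeat σv U.verts (ψ.vmap u) hallU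
    have hkeq : j = i + (j - i) := by omega
    rw [hkeq, Function.iterate_add_apply] at hEq
    have hyU : ∀ l < i, σv^[l] (σv^[j - i] (ψ.vmap u)) ∈ U.verts := by
      intro l _
      rw [← Function.iterate_add_apply]
      exact hallU _
    have hx0 : ψ.vmap u = σv^[j - i] (ψ.vmap u) :=
      iterate_cancel hs_inj i _ _ (fun l _ => hallU l) hyU hEq
    have hm1 : j - i = (j - i - 1) + 1 := by omega
    rw [hm1, Function.iterate_succ_apply'] at hx0
    obtain ⟨_, hxd⟩ := hs_b _ (hallU (j - i - 1)) u hu hx0.symm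
    exact hnone (j - i - 1) (hxd ▸ hdZ)
  have hkZ : ∀ u ∈ Y.verts, chainMap σv Z.verts (ψ.vmap u) ∈ Z.verts :=
    fun u hu => chainMap_mem (exists_hit u hu)
  have hkU : ∀ u ∈ Y.verts, ∀ j < chainStop σv Z.verts (ψ.vmap u),
      σv^[j] (ψ.vmap u) ∈ U.verts :=
    fun u hu j hj => memU_of_notZ u (hYsub u hu) _ (fun i hi => chainStop_notMem hi) j hj
  -- key distance rigidity
  have KeyA : ∀ u ∈ Y.verts, ∀ n, (∀ j < n, σv^[j] (ψ.vmap u) ∈ U.verts) →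
      σv^[n] (ψ.vmap u) = d → u = b := by
    intro u hu n hU hd'
    have h1' : D₂.edist c (σv^[n] (ψ.vmap u)) = D₁.edist a u :=
      (chain_mem u (hYsub u hu) n hU).2
    rw [hd', hcd] at h1'
    obtain ⟨nw, hnw⟩ := h₁.exists_walk_cross ha hu
    have hadd := (h₁.edist_add hu (D₁.edist a u) a (walkLen_edist ⟨nw, hnw⟩)).1 ha
    have hY0 : Y.edist b u = 0 := by omega
    exact (eq_of_edist_eq_zero (exists_walkLen_of_connected hYt.2.1 hbY hu) hY0).symm
  have KeyB : ∀ z ∈ Z.verts, D₂.edist c z = T.edist a b → z = d := by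
    intro z hz hEq
    obtain ⟨nw, hnw⟩ := h₂.exists_walk_cross hc hz
    have hadd := (h₂.edist_add hz (D₂.edist c z) c (walkLen_edist ⟨nw, hnw⟩)).1 hc
    have hucd : U.edist c d = T.edist a b := by
      have := h₂.edist_left hc hdU
      omega
    have hZ0 : Z.edist d z = 0 := by omega
    exact (eq_of_edist_eq_zero (exists_walkLen_of_connected hZt.2.1 hdZ hz) hZ0).symm
  have hρχ : ∀ u ∈ Y.verts,
      D₂.edist c (chainMap σv Z.verts (ψ.vmap u)) = D₁.edist a u := by
    intro u hu
    rw [chainMap_def]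
    exact (chain_mem u (hYsub u hu) _ (hkU u hu)).2
  have χb : chainMap σv Z.verts (ψ.vmap b) = d := by
    apply KeyB _ (hkZ b hbY)
    rw [hρχ b hbY, h₁.edist_left ha hbT]
  -- injectivity of the vertex chain map
  have χv_inj_le : ∀ u ∈ Y.verts, ∀ w ∈ Y.verts,
      chainStop σv Z.verts (ψ.vmap u) ≤ chainStop σv Z.verts (ψ.vmap w) →
      chainMap σv Z.verts (ψ.vmap u) = chainMap σv Z.verts (ψ.vmap w) → u = w := by
    intro u hu w hw hle hEq
    rw [chainMap_def, chainMap_def] at hEq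
    have hkeq : chainStop σv Z.verts (ψ.vmap w) =
        chainStop σv Z.verts (ψ.vmap u) +
          (chainStop σv Z.verts (ψ.vmap w) - chainStop σv Z.verts (ψ.vmap u)) := by omega
    rw [hkeq, Function.iterate_add_apply] at hEq
    have hyU : ∀ j < chainStop σv Z.verts (ψ.vmap u),
        σv^[j] (σv^[chainStop σv Z.verts (ψ.vmap w) - chainStop σv Z.verts (ψ.vmap u)]
          (ψ.vmap w)) ∈ U.verts := by
      intro j hj
      rw [← Function.iterate_add_apply]
      exact hkU w hw _ (by omega)
    have hx0 := iterate_cancel hs_inj _ _ _ (hkU u hu) hyU hEq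
    by_cases hm : chainStop σv Z.verts (ψ.vmap w) - chainStop σv Z.verts (ψ.vmap u) = 0
    · rw [hm] at hx0
      simp only [Function.iterate_zero_apply] at hx0
      exact bijOn_injOn ψ.vmap_bij (hYsub u hu) (hYsub w hw) hx0
    · exfalso
      have hm1 : chainStop σv Z.verts (ψ.vmap w) - chainStop σv Z.verts (ψ.vmap u) =
          (chainStop σv Z.verts (ψ.vmap w) - chainStop σv Z.verts (ψ.vmap u) - 1) + 1 := by
        omega
      rw [hm1, Function.iterate_succ_apply'] at hx0
      obtain ⟨_, hyd⟩ := hs_b _ (hkU w hw _ (by omega)) u hu hx0.symm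
      exact chainStop_notMem (x := ψ.vmap w)
        (j := chainStop σv Z.verts (ψ.vmap w) - chainStop σv Z.verts (ψ.vmap u) - 1)
        (by omega) (hyd ▸ hdZ)
  have χv_inj : ∀ u ∈ Y.verts, ∀ w ∈ Y.verts,
      chainMap σv Z.verts (ψ.vmap u) = chainMap σv Z.verts (ψ.vmap w) → u = w := by
    intro u hu w hw hEq
    rcases le_total (chainStop σv Z.verts (ψ.vmap u)) (chainStop σv Z.verts (ψ.vmap w))
      with h | h
    · exact χv_inj_le u hu w hw h hEq
    · exact (χv_inj_le w hw u hu h hEq.symm).symm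
  -- cardinalities
  have cardV : Y.verts.card = Z.verts.card := by
    have c1 := bijOn_card ψ.vmap_bij
    have c2 := bijOn_card θ.vmap_bij
    have c3 := Finset.card_union_add_card_inter T.verts Y.verts
    have c4 := Finset.card_union_add_card_inter U.verts Z.verts
    rw [h₁.2.2.1, ← hD1v, Finset.card_singleton] at c3
    rw [h₂.2.2.1, ← hD2v, Finset.card_singleton] at c4
    omega
  have cardE : Y.edges.card = Z.edges.card := by
    have c1 := bijOn_card ψ.emap_bij
    have c2 := bijOn_card θ.emap_bij
    have c3 := Finset.card_union_of_disjoint hTYe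
    have c4 := Finset.card_union_of_disjoint hUZe
    rw [← hD1e] at c3
    rw [← hD2e] at c4
    omega
  -- edge chains
  have chainE : ∀ e ∈ Y.edges, ∀ n, (∀ j < n, σe^[j] (ψ.emap e) ∈ U.edges) →
      σe^[n] (ψ.emap e) ∈ D₂.edges ∧
      D₂.ends (σe^[n] (ψ.emap e)) = (Y.ends e).map (fun v => σv^[n] (ψ.vmap v)) := by
    intro e he n
    have heD : e ∈ D₁.edges := hYEsub e he
    induction n with
    | zero =>
        intro _
        simp only [Function.iterate_zero_apply]
        refine ⟨bijOn_mapsTo ψ.emap_bij heD, ?_⟩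
        rw [ψ.ends_eq e heD, hD1Y e he]
    | succ n ih =>
        intro hU
        have hprev := ih (fun j hj => hU j (by omega))
        have hUn := hU n (by omega)
        rw [Function.iterate_succ_apply']
        refine ⟨hse_mem _ hUn, ?_⟩
        rw [hse_ends _ hUn, hprev.2, Sym2.map_map]
        apply sym2_map_congr
        intro x _
        show σv (σv^[n] (ψ.vmap x)) = σv^[n + 1] (ψ.vmap x)
        rw [Function.iterate_succ_apply']
  have memUE_of_notZ : ∀ e ∈ Y.edges, ∀ n, (∀ j < n, σe^[j] (ψ.emap e) ∉ Z.edges) →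
      ∀ j < n, σe^[j] (ψ.emap e) ∈ U.edges := by
    intro e he n hnZ j
    induction j using Nat.strong_induction_on with
    | _ j ihj =>
        intro hj
        have hD : σe^[j] (ψ.emap e) ∈ D₂.edges :=
          (chainE e he j (fun i hi => ihj i hi (by omega))).1
        have hnZ' := hnZ j hj
        rw [hD2e, Finset.mem_union] at hD
        tauto
  have exists_hitE : ∀ e ∈ Y.edges, ∃ n, σe^[n] (ψ.emap e) ∈ Z.edges := by
    intro e he
    by_contra hnone
    push_neg at hnone
    have hallU : ∀ j, σe^[j] (ψ.emap e) ∈ U.edges :=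
      fun j => memUE_of_notZ e he (j + 1) (fun i _ => hnone i) j (by omega)
    obtain ⟨i, j, hij, hEq⟩ := exists_iterate_repeat σe U.edges (ψ.emap e) hallU
    have hkeq : j = i + (j - i) := by omega
    rw [hkeq, Function.iterate_add_apply] at hEq
    have hyU : ∀ l < i, σe^[l] (σe^[j - i] (ψ.emap e)) ∈ U.edges := by
      intro l _
      rw [← Function.iterate_add_apply]
      exact hallU _
    have hx0 : ψ.emap e = σe^[j - i] (ψ.emap e) :=
      iterate_cancel hse_inj i _ _ (fun l _ => hallU l) hyU hEq
    have hm1 : j - i = (j - i - 1) + 1 := by omega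
    rw [hm1, Function.iterate_succ_apply'] at hx0
    exact hse_notY _ (hallU (j - i - 1)) e he hx0.symm
  have hkZE : ∀ e ∈ Y.edges, chainMap σe Z.edges (ψ.emap e) ∈ Z.edges :=
    fun e he => chainMap_mem (exists_hitE e he)
  have hkUE : ∀ e ∈ Y.edges, ∀ j < chainStop σe Z.edges (ψ.emap e),
      σe^[j] (ψ.emap e) ∈ U.edges :=
    fun e he j hj => memUE_of_notZ e he _ (fun i hi => chainStop_notMem hi) j hj
  -- endpoints of edge chains
  have endptZ : ∀ e ∈ Y.edges, ∀ u ∈ Y.ends e,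
      σv^[chainStop σe Z.edges (ψ.emap e)] (ψ.vmap u) ∈ Z.verts := by
    intro e he u hu
    have h1' := (chainE e he _ (hkUE e he)).2
    have h2' : σe^[chainStop σe Z.edges (ψ.emap e)] (ψ.emap e) ∈ Z.edges := hkZE e he
    have hmem : σv^[chainStop σe Z.edges (ψ.emap e)] (ψ.vmap u) ∈
        (Y.ends e).map (fun v => σv^[chainStop σe Z.edges (ψ.emap e)] (ψ.vmap v)) :=
      Sym2.mem_map.mpr ⟨u, hu, rfl⟩
    rw [← h1', hD2Z _ h2'] at hmem
    exact hZwf _ h2' _ hmem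
  have endptU : ∀ e ∈ Y.edges, ∀ u ∈ Y.ends e,
      ∀ j < chainStop σe Z.edges (ψ.emap e), σv^[j] (ψ.vmap u) ∈ U.verts := by
    intro e he u hu j hj
    have h1' := (chainE e he j (fun i hi => hkUE e he i (by omega))).2
    have h2' : σe^[j] (ψ.emap e) ∈ U.edges := hkUE e he j hj
    have hmem : σv^[j] (ψ.vmap u) ∈ (Y.ends e).map (fun v => σv^[j] (ψ.vmap v)) :=
      Sym2.mem_map.mpr ⟨u, hu, rfl⟩
    rw [← h1', hD2U _ h2'] at hmem
    exact hUwf _ h2' _ hmem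
  -- compatibility of vertex and edge chains
  have compat : ∀ e ∈ Y.edges, ∀ u ∈ Y.ends e,
      σv^[chainStop σe Z.edges (ψ.emap e)] (ψ.vmap u) =
        chainMap σv Z.verts (ψ.vmap u) := by
    intro e he u hu
    have huY : u ∈ Y.verts := hYwf e he u hu
    have hle : chainStop σv Z.verts (ψ.vmap u) ≤ chainStop σe Z.edges (ψ.emap e) :=
      chainStop_le (endptZ e he u hu)
    rcases eq_or_lt_of_le hle with heq | hlt
    · rw [chainMap_def, heq]
    · have hUu : σv^[chainStop σv Z.verts (ψ.vmap u)] (ψ.vmap u) ∈ U.verts :=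
        endptU e he u hu _ hlt
      have hZu : σv^[chainStop σv Z.verts (ψ.vmap u)] (ψ.vmap u) ∈ Z.verts := by
        rw [← chainMap_def]
        exact hkZ u huY
      have hd1 : σv^[chainStop σv Z.verts (ψ.vmap u)] (ψ.vmap u) = d := h₂.eq_b hUu hZu
      have hub : u = b := KeyA u huY _ (hkU u huY) hd1
      have hfinZ := endptZ e he u hu
      have hfinρ : D₂.edist c (σv^[chainStop σe Z.edges (ψ.emap e)] (ψ.vmap u)) =
          D₁.edist a u :=
        (chain_mem u (hYsub u huY) _ (fun j hj => endptU e he u hu j hj)).2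
      have hfind : σv^[chainStop σe Z.edges (ψ.emap e)] (ψ.vmap u) = d := by
        apply KeyB _ hfinZ
        rw [hfinρ, hub, h₁.edist_left ha hbT]
      rw [hfind, chainMap_def, hd1]
  -- injectivity of the edge chain map
  have χe_inj_le : ∀ e ∈ Y.edges, ∀ f ∈ Y.edges,
      chainStop σe Z.edges (ψ.emap e) ≤ chainStop σe Z.edges (ψ.emap f) →
      chainMap σe Z.edges (ψ.emap e) = chainMap σe Z.edges (ψ.emap f) → e = f := by
    intro e he f hf hle hEq
    rw [chainMap_def, chainMap_def] at hEq
    have hkeq : chainStop σe Z.edges (ψ.emap f) =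
        chainStop σe Z.edges (ψ.emap e) +
          (chainStop σe Z.edges (ψ.emap f) - chainStop σe Z.edges (ψ.emap e)) := by omega
    rw [hkeq, Function.iterate_add_apply] at hEq
    have hyU : ∀ j < chainStop σe Z.edges (ψ.emap e),
        σe^[j] (σe^[chainStop σe Z.edges (ψ.emap f) - chainStop σe Z.edges (ψ.emap e)]
          (ψ.emap f)) ∈ U.edges := by
      intro j hj
      rw [← Function.iterate_add_apply]
      exact hkUE f hf _ (by omega)
    have hx0 := iterate_cancel hse_inj _ _ _ (hkUE e he) hyU hEq
    by_cases hm : chainStop σe Z.edges (ψ.emap f) - chainStop σe Z.edges (ψ.emap e) = 0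
    · rw [hm] at hx0
      simp only [Function.iterate_zero_apply] at hx0
      exact bijOn_injOn ψ.emap_bij (hYEsub e he) (hYEsub f hf) hx0
    · exfalso
      have hm1 : chainStop σe Z.edges (ψ.emap f) - chainStop σe Z.edges (ψ.emap e) =
          (chainStop σe Z.edges (ψ.emap f) - chainStop σe Z.edges (ψ.emap e) - 1) + 1 := by
        omega
      rw [hm1, Function.iterate_succ_apply'] at hx0
      exact hse_notY _ (hkUE f hf _ (by omega)) e he hx0.symm
  have χe_inj : ∀ e ∈ Y.edges, ∀ f ∈ Y.edges,
      chainMap σe Z.edges (ψ.emap e) = chainMap σe Z.edges (ψ.emap f) → e = f := by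
    intro e he f hf hEq
    rcases le_total (chainStop σe Z.edges (ψ.emap e)) (chainStop σe Z.edges (ψ.emap f))
      with h | h
    · exact χe_inj_le e he f hf h hEq
    · exact (χe_inj_le f hf e he h hEq.symm).symm
  -- assemble the isomorphism
  refine ⟨⟨fun u => chainMap σv Z.verts (ψ.vmap u), fun e => chainMap σe Z.edges (ψ.emap e),
    ⟨?_, ?_, ?_⟩, ⟨?_, ?_, ?_⟩, ?_⟩, χb⟩
  · intro u hu
    exact Finset.mem_coe.mpr (hkZ u (Finset.mem_coe.mp hu))
  · intro u hu w hw hEq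
    exact χv_inj u (Finset.mem_coe.mp hu) w (Finset.mem_coe.mp hw) hEq
  · intro z hz
    obtain ⟨u, hu, huz⟩ := Finset.surj_on_of_inj_on_of_card_le
      (fun u _ => chainMap σv Z.verts (ψ.vmap u)) (fun u hu => hkZ u hu)
      (fun u₁ u₂ h1 h2 hEq => χv_inj u₁ h1 u₂ h2 hEq) (le_of_eq cardV.symm)
      z (Finset.mem_coe.mp hz)
    exact ⟨u, Finset.mem_coe.mpr hu, huz.symm⟩
  · intro e he
    exact Finset.mem_coe.mpr (hkZE e (Finset.mem_coe.mp he))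
  · intro e he f hf hEq
    exact χe_inj e (Finset.mem_coe.mp he) f (Finset.mem_coe.mp hf) hEq
  · intro z hz
    obtain ⟨e, he, hez⟩ := Finset.surj_on_of_inj_on_of_card_le
      (fun e _ => chainMap σe Z.edges (ψ.emap e)) (fun e he => hkZE e he)
      (fun e₁ e₂ h1 h2 hEq => χe_inj e₁ h1 e₂ h2 hEq) (le_of_eq cardE.symm)
      z (Finset.mem_coe.mp hz)
    exact ⟨e, Finset.mem_coe.mpr he, hez.symm⟩
  · intro e he
    have h2' : chainMap σe Z.edges (ψ.emap e) ∈ Z.edges := hkZE e he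
    rw [← hD2Z _ h2', chainMap_def]
    rw [(chainE e he _ (hkUE e he)).2]
    exact sym2_map_congr (fun u hu => compat e he u hu)
end
end
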